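/- (Biased case second moment bound) Let v_t = A^t v_0 + Σ_{s=1}^t A^{t-s}ξ_s where A is symmetric PSD with largest eigenvalue λ_1 = ‖A‖_2 ≤ ‖A‖_1, u_1 a unit eigenvector for λ_1, and E[‖ξ_s‖_2²] ≤ C_e ‖A‖_1^{2s} ‖v_0‖_1²/m for all s (no unbiasedness assumed). Then E[(u_1^T v_t − λ_1^t u_1^T v_0)²] ≤ C_e t² ‖A‖_1^{2t} ‖v_0‖_1² / m. -/

import Mathlib

open MeasureTheory Matrix Finset

/-- The induced 1-norm of a matrix: maximum absolute column sum. -/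
noncomputable def matNorm1 {N : ℕ} (A : Matrix (Fin N) (Fin N) ℝ) : ℝ :=
  ⨆ j, ∑ i, |A i j|

/-- Biased case second moment bound: if `v_t = A^t v₀ + Σ_{s=1}^t A^{t-s} ξ_s`
with `A` symmetric PSD, `u₁` a unit eigenvector for the largest eigenvalue
`λ₁ = ‖A‖₂ ≤ ‖A‖₁`, and `E‖ξ_s‖₂² ≤ C_e ‖A‖₁^{2s} ‖v₀‖₁²/m` (no unbiasedness),
then `E[(u₁ᵀ v_t − λ₁^t u₁ᵀ v₀)²] ≤ C_e t² ‖A‖₁^{2t} ‖v₀‖₁²/m`. -/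
theorem biased_second_moment_bound {Ω : Type*} {mΩ : MeasurableSpace Ω}
    (μ : Measure Ω) [IsProbabilityMeasure μ] {N : ℕ}
    (A : Matrix (Fin N) (Fin N) ℝ) (hA : A.IsSymm) (hpsd : A.PosSemidef)
    (u1 : Fin N → ℝ) (lam1 : ℝ) (heig : A *ᵥ u1 = lam1 • u1)
    (hunit : ∑ i, (u1 i) ^ 2 = 1)
    (hlam : lam1 = ‖Matrix.toEuclideanCLM (𝕜 := ℝ) A‖)
    (hle : lam1 ≤ matNorm1 A)
    (v0 : Fin N → ℝ) (ξ : ℕ → Ω → (Fin N → ℝ))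
    (Ce m : ℝ) (hCe : 0 < Ce) (hm : 0 < m)
    (hL2 : ∀ s, MemLp (ξ s) 2 μ)
    (hbound : ∀ s, 1 ≤ s →
      ∫ ω, ∑ i, (ξ s ω i) ^ 2 ∂μ ≤ Ce * (matNorm1 A) ^ (2 * s) * (∑ i, |v0 i|) ^ 2 / m)
    (t : ℕ) (ht : 1 ≤ t)
    (vt : Ω → (Fin N → ℝ))
    (hvt : ∀ ω, vt ω = (A ^ t) *ᵥ v0 + ∑ s ∈ Finset.Icc 1 t, (A ^ (t - s)) *ᵥ ξ s ω) :
    ∫ ω, (u1 ⬝ᵥ vt ω - lam1 ^ t * (u1 ⬝ᵥ v0)) ^ 2 ∂μ ≤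
      Ce * (t : ℝ) ^ 2 * (matNorm1 A) ^ (2 * t) * (∑ i, |v0 i|) ^ 2 / m := by
  have hlam0 : 0 ≤ lam1 := hlam ▸ norm_nonneg _
  have hB0 : 0 ≤ matNorm1 A := hlam0.trans hle
  set B := matNorm1 A with hB
  set V := ∑ i, |v0 i| with hV
  -- eigenvector for powers
  have hpow : ∀ k : ℕ, (A ^ k) *ᵥ u1 = (lam1 ^ k) • u1 := by
    intro k
    induction k with
    | zero => simp
    | succ k ih =>
      rw [pow_succ', ← Matrix.mulVec_mulVec, ih, Matrix.mulVec_smul, heig,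
        smul_smul, ← pow_succ]
  -- dot product identity
  have hdot : ∀ (k : ℕ) (x : Fin N → ℝ), u1 ⬝ᵥ ((A ^ k) *ᵥ x) = lam1 ^ k * (u1 ⬝ᵥ x) := by
    intro k x
    rw [Matrix.dotProduct_mulVec, ← Matrix.mulVec_transpose, Matrix.transpose_pow,
      hA.eq, hpow, smul_dotProduct, smul_eq_mul]
  -- key decomposition
  have hkey : ∀ ω, u1 ⬝ᵥ vt ω - lam1 ^ t * (u1 ⬝ᵥ v0)
      = ∑ s ∈ Finset.Icc 1 t, lam1 ^ (t - s) * (u1 ⬝ᵥ ξ s ω) := by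
    intro ω
    have hsum : u1 ⬝ᵥ (∑ s ∈ Finset.Icc 1 t, (A ^ (t - s)) *ᵥ ξ s ω)
        = ∑ s ∈ Finset.Icc 1 t, u1 ⬝ᵥ ((A ^ (t - s)) *ᵥ ξ s ω) := by
      simp only [dotProduct, Finset.sum_apply, Finset.mul_sum]
      exact Finset.sum_comm
    rw [hvt ω, dotProduct_add, hsum, hdot]
    simp only [hdot]
    ring
  -- component-wise L² and integrability of squared norms
  have hint : ∀ s, Integrable (fun ω => ∑ i, (ξ s ω i) ^ 2) μ := by
    intro s
    apply integrable_finset_sum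
    intro i _
    have hcomp : MemLp (fun ω => ξ s ω i) 2 μ :=
      (ContinuousLinearMap.proj (R := ℝ) (φ := fun _ : Fin N => ℝ) i).comp_memLp' (hL2 s)
    exact hcomp.integrable_sq
  have hFnn : ∀ s ω, 0 ≤ ∑ i, (ξ s ω i) ^ 2 := fun s ω =>
    Finset.sum_nonneg fun i _ => sq_nonneg _
  -- pointwise bound
  have hptwise : ∀ ω, (u1 ⬝ᵥ vt ω - lam1 ^ t * (u1 ⬝ᵥ v0)) ^ 2
      ≤ (t : ℝ) * ∑ s ∈ Finset.Icc 1 t, lam1 ^ (2 * (t - s)) * ∑ i, (ξ s ω i) ^ 2 := by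
    intro ω
    rw [hkey ω]
    calc (∑ s ∈ Finset.Icc 1 t, lam1 ^ (t - s) * (u1 ⬝ᵥ ξ s ω)) ^ 2
        ≤ (Finset.Icc 1 t).card * ∑ s ∈ Finset.Icc 1 t,
            (lam1 ^ (t - s) * (u1 ⬝ᵥ ξ s ω)) ^ 2 := sq_sum_le_card_mul_sum_sq
      _ ≤ (t : ℝ) * ∑ s ∈ Finset.Icc 1 t, lam1 ^ (2 * (t - s)) * ∑ i, (ξ s ω i) ^ 2 := by
          rw [Nat.card_Icc]
          simp only [Nat.add_sub_cancel]
          apply mul_le_mul_of_nonneg_left _ (by positivity)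
          apply Finset.sum_le_sum
          intro s _
          have hcs : (u1 ⬝ᵥ ξ s ω) ^ 2 ≤ ∑ i, (ξ s ω i) ^ 2 := by
            calc (u1 ⬝ᵥ ξ s ω) ^ 2 = (∑ i, u1 i * ξ s ω i) ^ 2 := rfl
              _ ≤ (∑ i, (u1 i) ^ 2) * ∑ i, (ξ s ω i) ^ 2 :=
                  Finset.sum_mul_sq_le_sq_mul_sq Finset.univ u1 (fun i => ξ s ω i)
              _ = ∑ i, (ξ s ω i) ^ 2 := by rw [hunit, one_mul]
          calc (lam1 ^ (t - s) * (u1 ⬝ᵥ ξ s ω)) ^ 2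
              = (lam1 ^ (t - s)) ^ 2 * (u1 ⬝ᵥ ξ s ω) ^ 2 := mul_pow _ _ _
            _ ≤ (lam1 ^ (t - s)) ^ 2 * ∑ i, (ξ s ω i) ^ 2 :=
                mul_le_mul_of_nonneg_left hcs (sq_nonneg _)
            _ = lam1 ^ (2 * (t - s)) * ∑ i, (ξ s ω i) ^ 2 := by
                rw [← pow_mul, mul_comm (t - s) 2]
  -- integrability of the majorant
  have hgint : Integrable (fun ω => (t : ℝ) * ∑ s ∈ Finset.Icc 1 t,
      lam1 ^ (2 * (t - s)) * ∑ i, (ξ s ω i) ^ 2) μ :=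
    ((integrable_finset_sum _ fun s _ => (hint s).const_mul _).const_mul _)
  -- main estimate
  calc ∫ ω, (u1 ⬝ᵥ vt ω - lam1 ^ t * (u1 ⬝ᵥ v0)) ^ 2 ∂μ
      ≤ ∫ ω, (t : ℝ) * ∑ s ∈ Finset.Icc 1 t,
          lam1 ^ (2 * (t - s)) * ∑ i, (ξ s ω i) ^ 2 ∂μ := by
        apply integral_mono_of_nonneg
        · exact Filter.Eventually.of_forall fun ω => sq_nonneg _
        · exact hgint
        · exact Filter.Eventually.of_forall hptwise
    _ = (t : ℝ) * ∑ s ∈ Finset.Icc 1 t,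
          lam1 ^ (2 * (t - s)) * ∫ ω, ∑ i, (ξ s ω i) ^ 2 ∂μ := by
        rw [integral_const_mul, integral_finset_sum _ fun s _ => (hint s).const_mul _]
        simp_rw [integral_const_mul]
    _ ≤ (t : ℝ) * ∑ s ∈ Finset.Icc 1 t, Ce * B ^ (2 * t) * V ^ 2 / m := by
        apply mul_le_mul_of_nonneg_left _ (by positivity)
        apply Finset.sum_le_sum
        intro s hs
        rw [Finset.mem_Icc] at hs
        calc lam1 ^ (2 * (t - s)) * ∫ ω, ∑ i, (ξ s ω i) ^ 2 ∂μ
            ≤ lam1 ^ (2 * (t - s)) * (Ce * B ^ (2 * s) * V ^ 2 / m) :=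
              mul_le_mul_of_nonneg_left (hbound s hs.1) (by positivity)
          _ ≤ B ^ (2 * (t - s)) * (Ce * B ^ (2 * s) * V ^ 2 / m) := by
              apply mul_le_mul_of_nonneg_right (pow_le_pow_left₀ hlam0 hle _) (by positivity)
          _ = Ce * B ^ (2 * t) * V ^ 2 / m := by
              rw [show (2 * t) = 2 * (t - s) + 2 * s by omega, pow_add]
              ring
    _ = Ce * (t : ℝ) ^ 2 * B ^ (2 * t) * V ^ 2 / m := by
        rw [Finset.sum_const, Nat.card_Icc, Nat.add_sub_cancel, nsmul_eq_mul]
        ring
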